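/- arXiv:2201.03920 — 2 statements merged into one kernel-verified Lean document; each statement's English description precedes it below -/
import Mathlib

section
/- The subgroup of SL(2,ℤ) generated by the two elements T = [[1,0],[1,1]] (the matrix with rows (1,0),(1,1)) and -1 (the negative identity matrix) is isomorphic, as a group, to ℤ × ℤ/2ℤ. -/
open Matrix

/-- The matrix `T = [[1,0],[1,1]]` as an element of `SL(2,ℤ)`. -/
def T : Matrix.SpecialLinearGroup (Fin 2) ℤ :=
  ⟨!![1, 0; 1, 1], by simp [Matrix.det_fin_two_of]⟩

/-- The negative of the identity matrix as an element of `SL(2,ℤ)`. -/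
def negId : Matrix.SpecialLinearGroup (Fin 2) ℤ :=
  ⟨!![-1, 0; 0, -1], by simp [Matrix.det_fin_two_of]⟩

lemma Tpow (n : ℤ) : (T ^ n : Matrix.SpecialLinearGroup (Fin 2) ℤ) =
    ⟨!![1, 0; n, 1], by simp [Matrix.det_fin_two_of]⟩ := by
  induction n using Int.induction_on with
  | zero =>
      apply Subtype.ext
      simp [Matrix.one_fin_two]
  | succ k ih =>
      apply Subtype.ext
      rw [_root_.zpow_add, ih, zpow_one]
      show ((⟨!![1, 0; (k:ℤ), 1], _⟩ : Matrix.SpecialLinearGroup (Fin 2) ℤ) : Matrix (Fin 2) (Fin 2) ℤ) * T = _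
      simp [T, Matrix.mul_fin_two]
  | pred k ih =>
      apply Subtype.ext
      rw [sub_eq_add_neg, _root_.zpow_add, ih]
      have hinv : (T ^ (-1 : ℤ) : Matrix.SpecialLinearGroup (Fin 2) ℤ) =
          ⟨!![1, 0; -1, 1], by simp [Matrix.det_fin_two_of]⟩ := by
        rw [_root_.zpow_neg, zpow_one]
        apply inv_eq_of_mul_eq_one_right
        apply Subtype.ext
        show (_ * _ : Matrix (Fin 2) (Fin 2) ℤ) = _
        simp [T, Matrix.mul_fin_two, Matrix.one_fin_two]
      rw [hinv]
      show (_ * _ : Matrix (Fin 2) (Fin 2) ℤ) = _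
      simp [Matrix.mul_fin_two]

lemma negId_coe : (negId : Matrix (Fin 2) (Fin 2) ℤ) = -1 := by
  ext i j
  fin_cases i <;> fin_cases j <;> simp [negId]

lemma negId_sq : negId * negId = 1 := by
  apply Subtype.ext
  show (_ * _ : Matrix (Fin 2) (Fin 2) ℤ) = _
  rw [negId_coe, neg_one_mul, neg_neg]
  rfl

lemma negId_comm (g : Matrix.SpecialLinearGroup (Fin 2) ℤ) : negId * g = g * negId := by
  apply Subtype.ext
  show ((negId : Matrix (Fin 2) (Fin 2) ℤ) * g) = ((g : Matrix (Fin 2) (Fin 2) ℤ) * negId)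
  rw [negId_coe, neg_one_mul, mul_neg_one]

lemma comm' (n : ℤ) (m : ℕ) : negId ^ m * T ^ n = T ^ n * negId ^ m := by
  induction m with
  | zero => simp
  | succ k ih => rw [pow_succ, mul_assoc, negId_comm, ← mul_assoc, ih, mul_assoc]

def fhom : Multiplicative (ℤ × ZMod 2) →* Matrix.SpecialLinearGroup (Fin 2) ℤ where
  toFun x := T ^ (x.toAdd.1) * negId ^ (x.toAdd.2.val)
  map_one' := by simp
  map_mul' x y := by
    have h2 : negId ^ 2 = 1 := by rw [pow_two]; exact negId_sq
    have key : ∀ a b : ZMod 2, negId ^ ((a + b).val) = negId ^ a.val * negId ^ b.val := by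
      intro a b
      rw [← pow_add, ZMod.val_add, ← pow_eq_pow_mod _ h2]
    show T ^ (x.toAdd.1 + y.toAdd.1) * negId ^ ((x.toAdd.2 + y.toAdd.2).val) =
      (T ^ (x.toAdd.1) * negId ^ (x.toAdd.2.val)) * (T ^ (y.toAdd.1) * negId ^ (y.toAdd.2.val))
    rw [key, _root_.zpow_add]
    simp only [mul_assoc]
    rw [← mul_assoc (T ^ (y.toAdd.1)), ← comm' (y.toAdd.1) (x.toAdd.2.val), mul_assoc]

lemma key_inj (n : ℤ) (k : ZMod 2) (hx' : T ^ n * negId ^ (k.val) = 1) : n = 0 ∧ k = 0 := by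
  have hcases : ∀ m : ZMod 2, m = 0 ∨ m = 1 := by decide
  rcases hcases k with h | h
  · subst h
    simp only [ZMod.val_zero, pow_zero, mul_one] at hx'
    refine ⟨?_, rfl⟩
    have := congrArg (fun g : Matrix.SpecialLinearGroup (Fin 2) ℤ =>
      (g : Matrix (Fin 2) (Fin 2) ℤ) 1 0) hx'
    rw [Tpow n] at this
    simpa using this
  · exfalso
    subst h
    have hv : (1 : ZMod 2).val = 1 := rfl
    rw [hv, pow_one] at hx'
    have := congrArg (fun g : Matrix.SpecialLinearGroup (Fin 2) ℤ =>
      (g : Matrix (Fin 2) (Fin 2) ℤ) 0 0) hx'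
    simp only [Matrix.SpecialLinearGroup.coe_mul, Tpow n] at this
    change (((!![1, 0; n, 1] : Matrix (Fin 2) (Fin 2) ℤ) * !![-1, 0; 0, -1] : Matrix (Fin 2) (Fin 2) ℤ)) 0 0 = (1 : ℤ) at this
    simp [negId, Matrix.mul_fin_two] at this

lemma fhom_inj : Function.Injective fhom := by
  rw [injective_iff_map_eq_one]
  intro x hx
  have hx' : T ^ (x.toAdd.1) * negId ^ (x.toAdd.2.val) = 1 := hx
  obtain ⟨h1, h2⟩ := key_inj _ _ hx'
  have : x.toAdd = 0 := Prod.ext h1 h2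
  exact Multiplicative.toAdd.injective this

/-- The subgroup of `SL(2,ℤ)` generated by `T = [[1,0],[1,1]]` and the negative identity
matrix is isomorphic, as a group, to `ℤ × ℤ/2ℤ`. -/
theorem stmt1 :
    Nonempty (↥(Subgroup.closure {T, negId}) ≃* Multiplicative (ℤ × ZMod 2)) := by
  have hrange : fhom.range = Subgroup.closure {T, negId} := by
    apply le_antisymm
    · rintro g ⟨x, rfl⟩
      show T ^ (x.toAdd.1) * negId ^ (x.toAdd.2.val) ∈ _
      exact mul_mem
        (zpow_mem (Subgroup.subset_closure (by simp)) _)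
        (pow_mem (Subgroup.subset_closure (by simp)) _)
    · rw [Subgroup.closure_le]
      rintro g (rfl | rfl)
      · exact ⟨Multiplicative.ofAdd (1, 0),
          by show T ^ (1:ℤ) * negId ^ ((0 : ZMod 2).val) = T; simp⟩
      · refine ⟨Multiplicative.ofAdd (0, 1), ?_⟩
        show T ^ (0:ℤ) * negId ^ ((1 : ZMod 2).val) = negId
        rw [show (1 : ZMod 2).val = 1 from rfl]
        simp
  exact ⟨((MonoidHom.ofInjective fhom_inj).trans (MulEquiv.subgroupCongr hrange)).symm⟩
end

section
/- The formula (x,ε)·(s,n) := ((-1)^ε s + n•x, n), for (x,ε) ∈ P = S¹ ⋊ ℤ/2 and (s,n) ∈ A = S¹ × ℤ, defines an action of P on A by group automorphisms (i.e. a group homomorphism P → Aut(A)); moreover the resulting semidirect product H = A ⋊ P = (S¹ × ℤ) ⋊ (S¹ ⋊ ℤ/2) is isomorphic as a group to the semidirect product (ℝ/ℤ)² ⋊ (ℤ × ℤ/2ℤ), where (n,ε) ∈ ℤ × ℤ/2ℤ acts on the torus (ℝ/ℤ)² via the matrix [[1,0],[n,1]]·(-1)^ε, i.e. by (a,b) ↦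 ((-1)^ε a, (-1)^ε (n•a + b)). -/
/-- The additive circle `S¹ = ℝ/ℤ`, written multiplicatively. -/
abbrev S1 : Type := Multiplicative (AddCircle (1 : ℝ))

open Multiplicative

namespace Stmt4Aux

lemma zmod2_cases (u : ZMod 2) : u = 0 ∨ u = 1 := by revert u; decide

lemma mz2_cases (g : Multiplicative (ZMod 2)) :
    g = Multiplicative.ofAdd 0 ∨ g = Multiplicative.ofAdd 1 := by revert g; decide

/-- hom from `Multiplicative (ZMod 2)` determined by an element of order dividing 2. -/
def homZ2 {G : Type*} [Group G] (g : G) (h : g * g = 1) :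
    Multiplicative (ZMod 2) →* G :=
  MonoidHom.mk' (fun ε => g ^ (ε.toAdd.val)) (by
    intro a b
    have key : ∀ u v : ZMod 2, g ^ (u + v).val = g ^ u.val * g ^ v.val := by
      intro u v
      rcases zmod2_cases u with rfl | rfl <;> rcases zmod2_cases v with rfl | rfl <;>
        simp [h, show ((1 + 1 : ZMod 2)).val = 0 from rfl, ZMod.val_one]
    simpa using key a.toAdd b.toAdd)

@[simp] lemma homZ2_apply {G : Type*} [Group G] (g : G) (h : g * g = 1)
    (ε : Multiplicative (ZMod 2)) : homZ2 g h ε = g ^ (ε.toAdd.val) := rfl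

noncomputable def negC : MulAut S1 := MulEquiv.inv S1

@[simp] lemma negC_apply (s : S1) : negC s = s⁻¹ := rfl

lemma negC_sq : negC * negC = 1 := by
  ext s; simp [MulAut.mul_apply]

/-- The action of `ZMod 2` on `S1` by inversion. -/
noncomputable def phiP : Multiplicative (ZMod 2) →* MulAut S1 := homZ2 negC negC_sq

lemma phiP_spec (ε : ZMod 2) (s : S1) :
    phiP (Multiplicative.ofAdd ε) s = s ^ ((-1 : ℤ) ^ ε.val) := by
  rcases zmod2_cases ε with rfl | rfl <;>
    simp [phiP, ZMod.val_one]

/-- The shear automorphism `(s,n) ↦ (s x^n, n)` of `S1 × ℤ`. -/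
noncomputable def shearAut (x : S1) : MulAut (S1 × Multiplicative ℤ) where
  toFun p := (p.1 * x ^ p.2.toAdd, p.2)
  invFun p := (p.1 * (x ^ p.2.toAdd)⁻¹, p.2)
  left_inv p := by simp [mul_assoc]
  right_inv p := by simp [mul_assoc]
  map_mul' p q := by
    simp only [Prod.fst_mul, Prod.snd_mul, toAdd_mul, zpow_add, Prod.mk_mul_mk]
    rw [Prod.ext_iff]
    exact ⟨by simp [mul_comm, mul_left_comm, mul_assoc], rfl⟩

@[simp] lemma shearAut_apply (x : S1) (p : S1 × Multiplicative ℤ) :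
    shearAut x p = (p.1 * x ^ p.2.toAdd, p.2) := rfl

noncomputable def shear : S1 →* MulAut (S1 × Multiplicative ℤ) :=
  MonoidHom.mk' shearAut (by
    intro x y
    apply MulEquiv.ext
    intro p
    simp [MulAut.mul_apply, mul_zpow, mul_comm, mul_left_comm, mul_assoc])

@[simp] lemma shear_apply (x : S1) (p : S1 × Multiplicative ℤ) :
    shear x p = (p.1 * x ^ p.2.toAdd, p.2) := rfl

/-- Inversion on the first factor of `S1 × ℤ`. -/
noncomputable def nuAut : MulAut (S1 × Multiplicative ℤ) :=
  (MulEquiv.inv S1).prodCongr (MulEquiv.refl _)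

@[simp] lemma nuAut_apply (p : S1 × Multiplicative ℤ) : nuAut p = (p.1⁻¹, p.2) := rfl

lemma nuAut_sq : nuAut * nuAut = 1 := by
  ext p <;> simp [MulAut.mul_apply]

@[simp] lemma nuAut_inv : nuAut⁻¹ = nuAut := inv_eq_of_mul_eq_one_left nuAut_sq

@[simp] lemma shear_inv_apply (x : S1) (p : S1 × Multiplicative ℤ) :
    (shear x)⁻¹ p = (p.1 * (x ^ p.2.toAdd)⁻¹, p.2) := rfl

@[simp] lemma shear_symm_apply (x : S1) (p : S1 × Multiplicative ℤ) :
    (shear x).symm p = (p.1 * (x ^ p.2.toAdd)⁻¹, p.2) := rfl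


/-- The `ZMod 2` part of the action on `S1 × ℤ`. -/
noncomputable def fB : Multiplicative (ZMod 2) →* MulAut (S1 × Multiplicative ℤ) :=
  homZ2 nuAut nuAut_sq

lemma compat (g : Multiplicative (ZMod 2)) :
    shear.comp ((phiP g).toMonoidHom) =
      (MulAut.conj (fB g)).toMonoidHom.comp shear := by
  rcases mz2_cases g with rfl | rfl <;>
  · apply MonoidHom.ext; intro x
    apply MulEquiv.ext; intro p
    simp [phiP, fB, MulAut.conj_apply, MulAut.mul_apply, ZMod.val_one,
      inv_zpow, mul_comm, mul_left_comm, mul_assoc]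

/-- The action of `P = S1 ⋊ ZMod 2` on `S1 × ℤ`. -/
noncomputable def phiH : (S1 ⋊[phiP] Multiplicative (ZMod 2)) →* MulAut (S1 × Multiplicative ℤ) :=
  SemidirectProduct.lift shear fB compat

lemma phiH_spec (x : S1) (ε : ZMod 2) (s : S1) (n : ℤ) :
    phiH ⟨x, Multiplicative.ofAdd ε⟩ (s, Multiplicative.ofAdd n) =
      (s ^ ((-1 : ℤ) ^ ε.val) * x ^ n, Multiplicative.ofAdd n) := by
  rcases zmod2_cases ε with rfl | rfl <;>
    simp [phiH, SemidirectProduct.lift, fB, MulAut.mul_apply, ZMod.val_one]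

/-- The shear `(a,b) ↦ (a, a^m b)` of the torus. -/
noncomputable def tAut (m : ℤ) : MulAut (S1 × S1) where
  toFun p := (p.1, p.1 ^ m * p.2)
  invFun p := (p.1, (p.1 ^ m)⁻¹ * p.2)
  left_inv p := by simp [mul_assoc]
  right_inv p := by simp [mul_assoc]
  map_mul' p q := by
    rw [Prod.ext_iff]
    exact ⟨rfl, by simp [mul_zpow, mul_comm, mul_left_comm, mul_assoc]⟩

@[simp] lemma tAut_apply (m : ℤ) (p : S1 × S1) : tAut m p = (p.1, p.1 ^ m * p.2) := rfl

noncomputable def psi1 : Multiplicative ℤ →* MulAut (S1 × S1) :=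
  MonoidHom.mk' (fun m => tAut m.toAdd) (by
    intro m m'
    apply MulEquiv.ext; intro p
    simp [MulAut.mul_apply, zpow_add, mul_assoc])

@[simp] lemma psi1_apply (m : Multiplicative ℤ) (p : S1 × S1) :
    psi1 m p = (p.1, p.1 ^ m.toAdd * p.2) := rfl

/-- Inversion on both factors of the torus. -/
noncomputable def invAut2 : MulAut (S1 × S1) :=
  (MulEquiv.inv S1).prodCongr (MulEquiv.inv S1)

@[simp] lemma invAut2_apply (p : S1 × S1) : invAut2 p = (p.1⁻¹, p.2⁻¹) := rfl

lemma invAut2_sq : invAut2 * invAut2 = 1 := by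
  ext p <;> simp [MulAut.mul_apply]

noncomputable def psi2 : Multiplicative (ZMod 2) →* MulAut (S1 × S1) :=
  homZ2 invAut2 invAut2_sq

lemma psi_comm (m : Multiplicative ℤ) (ε : Multiplicative (ZMod 2)) :
    Commute (psi1 m) (psi2 ε) := by
  rcases mz2_cases ε with rfl | rfl <;>
  · apply MulEquiv.ext; intro p
    simp [psi2, MulAut.mul_apply, ZMod.val_one, inv_zpow, mul_inv, mul_comm]

/-- The action of `ℤ × ZMod 2` on the torus. -/
noncomputable def psiT : Multiplicative ℤ × Multiplicative (ZMod 2) →* MulAut (S1 × S1) :=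
  psi1.noncommCoprod psi2 psi_comm

lemma psiT_spec (n : ℤ) (ε : ZMod 2) (a b : S1) :
    psiT (Multiplicative.ofAdd n, Multiplicative.ofAdd ε) (a, b) =
      (a ^ ((-1 : ℤ) ^ ε.val), (a ^ n * b) ^ ((-1 : ℤ) ^ ε.val)) := by
  rcases zmod2_cases ε with rfl | rfl <;>
    simp [psiT, psi2, MulAut.mul_apply, ZMod.val_one, inv_zpow, mul_inv, mul_comm]

@[simp] lemma psi1_inv_apply (m : Multiplicative ℤ) (p : S1 × S1) :
    (psi1 m)⁻¹ p = (p.1, (p.1 ^ toAdd m)⁻¹ * p.2) := rfl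

@[simp] lemma psi1_symm_apply (m : Multiplicative ℤ) (p : S1 × S1) :
    (psi1 m).symm p = (p.1, (p.1 ^ toAdd m)⁻¹ * p.2) := rfl

set_option maxHeartbeats 2000000 in
/-- The isomorphism `(S¹ × ℤ) ⋊ (S¹ ⋊ ℤ/2) ≃ (S¹ × S¹) ⋊ (ℤ × ℤ/2)`,
`((s,n),(x,ε)) ↦ ((x, s x^{-n}), (-n, ε))`. -/
noncomputable def bigIso :
    ((S1 × Multiplicative ℤ) ⋊[phiH] (S1 ⋊[phiP] Multiplicative (ZMod 2))) ≃*
      ((S1 × S1) ⋊[psiT] (Multiplicative ℤ × Multiplicative (ZMod 2))) where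
  toFun g := ⟨(g.right.left, g.left.1 * (g.right.left ^ (toAdd g.left.2))⁻¹),
      (Multiplicative.ofAdd (-(toAdd g.left.2)), g.right.right)⟩
  invFun k := ⟨(k.left.2 * (k.left.1 ^ (toAdd k.right.1))⁻¹,
      Multiplicative.ofAdd (-(toAdd k.right.1))), ⟨k.left.1, k.right.2⟩⟩
  left_inv g := by
    ext <;> simp [zpow_neg, mul_assoc]
  right_inv k := by
    ext <;> simp [zpow_neg, mul_assoc]
  map_mul' g h := by
    rcases g with ⟨⟨s, n⟩, x, e⟩
    rcases h with ⟨⟨t, m⟩, y, f⟩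
    obtain ⟨n, rfl⟩ : ∃ k : ℤ, ofAdd k = n := ⟨toAdd n, rfl⟩
    obtain ⟨m, rfl⟩ : ∃ k : ℤ, ofAdd k = m := ⟨toAdd m, rfl⟩
    rcases mz2_cases e with rfl | rfl <;> rcases mz2_cases f with rfl | rfl <;>
      ext : 2 <;>
        simp only [SemidirectProduct.mul_left, SemidirectProduct.mul_right, Prod.fst_mul,
          Prod.snd_mul, phiH_spec, phiP_spec, psiT_spec, toAdd_ofAdd] <;>
        simp [phiH, phiP, SemidirectProduct.lift, fB, psiT, psi2, MulAut.mul_apply,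
          ZMod.val_one, zpow_neg, zpow_add, inv_zpow, mul_inv, mul_zpow, neg_add, ofAdd_add,
          mul_comm, mul_left_comm, mul_assoc] <;>
      simp [inv_mul_cancel_left, mul_inv_cancel_left, ← mul_assoc, mul_inv_cancel_comm,
        inv_mul_cancel_comm, mul_inv_eq_iff_eq_mul, mul_comm, mul_left_comm]

end Stmt4Aux

/-- Let `P = S¹ ⋊ ℤ/2` (with `ℤ/2` acting on `S¹` by negation, i.e. `ε` acting by
`s ↦ (-1)^ε • s`). The formula `(x,ε)·(s,n) := ((-1)^ε s + n•x, n)` (written here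
multiplicatively as `(s,n) ↦ (s^((-1)^ε) * x^n, n)`) defines an action of `P` on
`A = S¹ × ℤ` by group automorphisms, i.e. a group homomorphism `P → Aut(A)`, and the
resulting semidirect product `H = A ⋊ P = (S¹ × ℤ) ⋊ (S¹ ⋊ ℤ/2)` is isomorphic as a group
to the semidirect product `(ℝ/ℤ)² ⋊ (ℤ × ℤ/2ℤ)`, where `(n,ε)` acts on the torus via the
matrix `[[1,0],[n,1]]·(-1)^ε`, i.e. by `(a,b) ↦ ((-1)^ε a, (-1)^ε (n•a + b))`. -/
theorem stmt4 :
    ∃ φP : Multiplicative (ZMod 2) →* MulAut S1,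
      (∀ (ε : ZMod 2) (s : S1), φP (Multiplicative.ofAdd ε) s = s ^ ((-1 : ℤ) ^ ε.val)) ∧
      ∃ φH : SemidirectProduct S1 (Multiplicative (ZMod 2)) φP →*
          MulAut (S1 × Multiplicative ℤ),
        (∀ (x : S1) (ε : ZMod 2) (s : S1) (n : ℤ),
            φH ⟨x, Multiplicative.ofAdd ε⟩ (s, Multiplicative.ofAdd n) =
              (s ^ ((-1 : ℤ) ^ ε.val) * x ^ n, Multiplicative.ofAdd n)) ∧
        ∃ ψ : Multiplicative ℤ × Multiplicative (ZMod 2) →* MulAut (S1 × S1),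
          (∀ (n : ℤ) (ε : ZMod 2) (a b : S1),
              ψ (Multiplicative.ofAdd n, Multiplicative.ofAdd ε) (a, b) =
                (a ^ ((-1 : ℤ) ^ ε.val), (a ^ n * b) ^ ((-1 : ℤ) ^ ε.val))) ∧
          Nonempty
            (SemidirectProduct (S1 × Multiplicative ℤ)
                (SemidirectProduct S1 (Multiplicative (ZMod 2)) φP) φH ≃*
              SemidirectProduct (S1 × S1) (Multiplicative ℤ × Multiplicative (ZMod 2)) ψ) := by
  exact ⟨Stmt4Aux.phiP, Stmt4Aux.phiP_spec, Stmt4Aux.phiH, Stmt4Aux.phiH_spec,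
    Stmt4Aux.psiT, Stmt4Aux.psiT_spec, ⟨Stmt4Aux.bigIso⟩⟩
end
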